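/- For every n ∈ ℕ, Σ_{j=0}^{n} Σ_{k=0}^{2n} ((−2/3)_k / k!) · C(k,j) · C(3n−k, 2n−k) · C(2n−k, n−j) = 27^n · (1/9)_n (4/9)_n (7/9)_n / ((1/3)_n · (n!)²). (This expresses, in coefficient form, that ₃F₂([1/9, 4/9, 7/9], [1/3, 1], 27x) is the diagonal of the algebraic function (1−x−y)^{2/3}/(1−x−y−z).) -/

import Mathlib

open Finset Polynomial

noncomputable def pr (a : ℚ) (k : ℕ) : ℚ := (ascPochhammer ℚ k).eval a / (Nat.factorial k : ℚ)

lemma pr_zero (a : ℚ) : pr a 0 = 1 := by simp [pr]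

lemma pr_succ_mul (a : ℚ) (k : ℕ) : ((k:ℚ)+1) * pr a (k+1) = a * pr (a+1) k := by
  have h : (ascPochhammer ℚ (k+1)).eval a = a * (ascPochhammer ℚ k).eval (a+1) := by
    rw [ascPochhammer_succ_left]
    simp [eval_comp]
  have hk : (Nat.factorial k : ℚ) ≠ 0 := Nat.cast_ne_zero.2 (Nat.factorial_ne_zero k)
  have hk1 : ((k:ℚ)+1) ≠ 0 := by positivity
  simp only [pr, h, Nat.factorial_succ]
  push_cast
  field_simp

lemma pr_vandermonde : ∀ (m : ℕ) (a b : ℚ),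
    ∑ k ∈ range (m+1), pr a k * pr b (m-k) = pr (a+b) m := by
  intro m
  induction m with
  | zero => intro a b; simp [pr_zero]
  | succ m ih =>
    intro a b
    have key : ((m:ℚ)+1) * ∑ k ∈ range (m+2), pr a k * pr b (m+1-k)
        = (a+b) * pr (a+b+1) m := by
      rw [Finset.mul_sum]
      have split : ∀ k ∈ range (m+2), ((m:ℚ)+1) * (pr a k * pr b (m+1-k))
          = ((k:ℚ) * pr a k) * pr b (m+1-k) + pr a k * (((m+1-k : ℕ):ℚ) * pr b (m+1-k)) := by
        intro k hk
        have hk' : k ≤ m+1 := Nat.lt_succ_iff.mp (mem_range.mp hk)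
        have : ((m+1-k : ℕ):ℚ) = (m:ℚ) + 1 - (k:ℚ) := by
          push_cast [Nat.cast_sub hk']; ring
        rw [this]; ring
      rw [Finset.sum_congr rfl split, Finset.sum_add_distrib]
      have h1 : ∑ k ∈ range (m+2), ((k:ℚ) * pr a k) * pr b (m+1-k)
          = a * pr (a+1+b) m := by
        rw [Finset.sum_range_succ']
        simp only [Nat.cast_zero, zero_mul, add_zero]
        rw [← ih (a+1) b, Finset.mul_sum]
        apply Finset.sum_congr rfl
        intro i hi
        have : (m+1-(i+1)) = m - i := by omega
        rw [this]
        have := pr_succ_mul a i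
        push_cast
        rw [this]
        ring
      have h2 : ∑ k ∈ range (m+2), pr a k * (((m+1-k : ℕ):ℚ) * pr b (m+1-k))
          = b * pr (a+(b+1)) m := by
        rw [Finset.sum_range_succ]
        simp only [Nat.sub_self, Nat.cast_zero, zero_mul, mul_zero, add_zero]
        rw [← ih a (b+1), Finset.mul_sum]
        apply Finset.sum_congr rfl
        intro k hk
        have hk' : k ≤ m := Nat.lt_succ_iff.mp (mem_range.mp hk)
        have e1 : m+1-k = (m-k)+1 := by omega
        rw [e1]
        push_cast
        rw [pr_succ_mul b (m-k)]
        ring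
      rw [h1, h2]
      have : a+1+b = a+b+1 := by ring
      have e : a+(b+1) = a+b+1 := by ring
      rw [this, e]; ring
    have h2 := pr_succ_mul (a+b) m
    have hm : ((m:ℚ)+1) ≠ 0 := by positivity
    have := key.trans h2.symm
    exact mul_left_cancel₀ hm this

lemma pr_nat (n m : ℕ) : pr ((n:ℚ)+1) m = ((n+m).choose m : ℚ) := by
  have h : (ascPochhammer ℚ m).eval ((n:ℚ)+1) = (((n+1 : ℕ)).ascFactorial m : ℚ) := by
    rw [← ascPochhammer_nat_eq_ascFactorial, ascPochhammer_eval_cast]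
    push_cast
    ring_nf
  rw [pr, h, Nat.ascFactorial_eq_factorial_mul_choose]
  have hm : (Nat.factorial m : ℚ) ≠ 0 := Nat.cast_ne_zero.2 (Nat.factorial_ne_zero m)
  push_cast
  field_simp

lemma trip (n : ℕ) : (ascPochhammer ℚ (3*n)).eval (1/3) =
    27^n * (ascPochhammer ℚ n).eval (1/9) * (ascPochhammer ℚ n).eval (4/9) *
      (ascPochhammer ℚ n).eval (7/9) := by
  induction n with
  | zero => simp
  | succ n ih =>
    have e : 3*(n+1) = (3*n+1)+1+1 := by ring
    rw [e, ascPochhammer_succ_eval, ascPochhammer_succ_eval, ascPochhammer_succ_eval, ih,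
      ascPochhammer_succ_eval, ascPochhammer_succ_eval, ascPochhammer_succ_eval]
    push_cast
    ring

lemma poch_mul (n : ℕ) : (ascPochhammer ℚ (3*n)).eval (1/3) =
    (ascPochhammer ℚ n).eval (1/3) * (ascPochhammer ℚ (2*n)).eval (1/3 + (n:ℚ)) := by
  have h := congrArg (Polynomial.eval (1/3 : ℚ)) (ascPochhammer_mul (S := ℚ) n (2*n))
  simp only [eval_mul, eval_comp, eval_add, eval_X, eval_natCast] at h
  rw [show 3*n = n + 2*n by ring, ← h]

/-- `₃F₂([1/9, 4/9, 7/9], [1/3, 1], 27x)` is the diagonal of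
`(1-x-y)^{2/3}/(1-x-y-z)`, stated coefficient-wise. -/
theorem diagonal_coeff_1_9_4_9_7_9 (n : ℕ) :
    ∑ j ∈ range (n + 1), ∑ k ∈ range (2 * n + 1),
        ((ascPochhammer ℚ k).eval (-(2 / 3)) / (Nat.factorial k : ℚ)) *
          (Nat.choose k j : ℚ) * (Nat.choose (3 * n - k) (2 * n - k) : ℚ) *
          (Nat.choose (2 * n - k) (n - j) : ℚ) =
    27 ^ n * (ascPochhammer ℚ n).eval (1 / 9) * (ascPochhammer ℚ n).eval (4 / 9) *
        (ascPochhammer ℚ n).eval (7 / 9) /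
      ((ascPochhammer ℚ n).eval (1 / 3) * (Nat.factorial n : ℚ) ^ 2) := by
  rw [Finset.sum_comm]
  have step1 : ∀ k ∈ range (2*n+1),
      ∑ j ∈ range (n+1),
        ((ascPochhammer ℚ k).eval (-(2 / 3)) / (Nat.factorial k : ℚ)) *
          (Nat.choose k j : ℚ) * (Nat.choose (3 * n - k) (2 * n - k) : ℚ) *
          (Nat.choose (2 * n - k) (n - j) : ℚ)
      = (pr (-(2/3)) k * pr ((n:ℚ)+1) (2*n-k)) * ((2*n).choose n : ℚ) := by
    intro k hk
    have hk' : k ≤ 2*n := Nat.lt_succ_iff.mp (mem_range.mp hk)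
    have hv : ((2*n).choose n : ℕ) = ∑ j ∈ range (n+1), k.choose j * (2*n-k).choose (n-j) := by
      have h := Nat.add_choose_eq k (2*n-k) n
      rw [Finset.Nat.sum_antidiagonal_eq_sum_range_succ_mk] at h
      rw [← h]
      congr 1
      omega
    have hb : ((3*n-k).choose (2*n-k) : ℚ) = pr ((n:ℚ)+1) (2*n-k) := by
      rw [pr_nat n (2*n-k)]
      congr 2
      omega
    have : ∀ j ∈ range (n+1),
        ((ascPochhammer ℚ k).eval (-(2 / 3)) / (Nat.factorial k : ℚ)) *
          (Nat.choose k j : ℚ) * (Nat.choose (3 * n - k) (2 * n - k) : ℚ) *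
          (Nat.choose (2 * n - k) (n - j) : ℚ)
        = (pr (-(2/3)) k * pr ((n:ℚ)+1) (2*n-k)) *
            ((k.choose j * (2*n-k).choose (n-j) : ℕ) : ℚ) := by
      intro j hj
      rw [hb.symm]
      push_cast
      simp only [pr]
      ring
    rw [Finset.sum_congr rfl this, ← Finset.mul_sum]
    congr 1
    rw [← Nat.cast_sum, ← hv]
  rw [Finset.sum_congr rfl step1, ← Finset.sum_mul, pr_vandermonde (2*n) (-(2/3)) ((n:ℚ)+1)]
  have harg : -(2/3) + ((n:ℚ)+1) = 1/3 + (n:ℚ) := by ring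
  rw [harg]
  -- now: pr (1/3 + n) (2n) * C(2n,n) = RHS
  have h13 : (ascPochhammer ℚ n).eval (1/3) ≠ 0 :=
    ne_of_gt (ascPochhammer_pos n (1/3 : ℚ) (by norm_num))
  have hfn : (Nat.factorial n : ℚ) ≠ 0 := Nat.cast_ne_zero.2 (Nat.factorial_ne_zero n)
  have hf2n : (Nat.factorial (2*n) : ℚ) ≠ 0 := Nat.cast_ne_zero.2 (Nat.factorial_ne_zero (2*n))
  have hch : ((2*n).choose n : ℚ) * (Nat.factorial n : ℚ) * (Nat.factorial n : ℚ)
      = (Nat.factorial (2*n) : ℚ) := by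
    have h := Nat.choose_mul_factorial_mul_factorial (show n ≤ 2*n by omega)
    rw [show 2*n-n = n by omega] at h
    exact_mod_cast congrArg (fun x : ℕ => (x : ℚ)) h
  have hQ : 27 ^ n * (ascPochhammer ℚ n).eval (1 / 9) * (ascPochhammer ℚ n).eval (4 / 9) *
        (ascPochhammer ℚ n).eval (7 / 9)
      = (ascPochhammer ℚ n).eval (1/3) * (ascPochhammer ℚ (2*n)).eval (1/3 + (n:ℚ)) := by
    rw [← trip, poch_mul]
  rw [hQ, pr]
  set Q : ℚ := (ascPochhammer ℚ (2*n)).eval (1/3 + (n:ℚ)) with hQdef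
  set P : ℚ := (ascPochhammer ℚ n).eval (1/3) with hPdef
  field_simp
  linear_combination Q * hch
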